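/- arXiv:1305.4283 — 2 statements merged into one kernel-verified Lean document; each statement's English description precedes it below -/
import Mathlib

section
/- Let k ≥ 1 be an integer and let 0 < b < a be reals. Define P : (0,∞) → ℝ by P(ρ) = G_k(a/ρ) − G_k(b/ρ). Then, with ρ_max = (a − b)/(k · log(a/b)), the function P is strictly increasing on (0, ρ_max] and strictly decreasing on [ρ_max, ∞); moreover P(ρ) → 0 as ρ → 0⁺ and P(ρ) → 0 as ρ → ∞. -/
open MeasureTheory ProbabilityTheory

/-- The cumulative distribution function of the chi-squared distribution with `k` degrees of
freedom, i.e. of the Gamma distribution with shape `k/2` and rate `1/2`. -/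
noncomputable def chisqCDF (k : ℕ) (x : ℝ) : ℝ :=
  ((gammaMeasure ((k : ℝ) / 2) (1 / 2)) (Set.Iic x)).toReal

open Set Filter Topology Real

-- continuity of gamma pdf at positive points
lemma gammaPDFReal_continuousAt {s r x : ℝ} (hx : 0 < x) :
    ContinuousAt (gammaPDFReal s r) x := by
  have h : ContinuousAt (fun t : ℝ => r ^ s / Real.Gamma s * t ^ (s - 1) * Real.exp (-(r * t))) x := by
    exact ((continuousAt_const.mul (Real.continuousAt_rpow_const x _ (Or.inl hx.ne'))).mul
      ((Real.continuous_exp.comp ((continuous_const.mul continuous_id).neg)).continuousAt))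
  refine h.congr ?_
  filter_upwards [isOpen_Ioi.eventually_mem hx] with t ht
  simp [gammaPDFReal, (le_of_lt ht : (0:ℝ) ≤ t)]

lemma gammaCDF_add_integral {s r u v : ℝ} (hs : 0 < s) (hr : 0 < r) (hu : 0 < u) (huv : u ≤ v) :
    ((gammaMeasure s r) (Iic v)).toReal =
      ((gammaMeasure s r) (Iic u)).toReal + ∫ t in u..v, gammaPDFReal s r t := by
  have := isProbabilityMeasure_gammaMeasure hs hr
  have hmeas : (gammaMeasure s r) (Iic v) = (gammaMeasure s r) (Iic u)
      + (gammaMeasure s r) (Ioc u v) := by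
    rw [← Set.Iic_union_Ioc_eq_Iic huv,
      measure_union (Set.Iic_disjoint_Ioc le_rfl) measurableSet_Ioc]
  have hcont : ContinuousOn (gammaPDFReal s r) (Icc u v) := fun t ht =>
    (gammaPDFReal_continuousAt (lt_of_lt_of_le hu ht.1)).continuousWithinAt
  have hInt : IntegrableOn (gammaPDFReal s r) (Ioc u v) :=
    (hcont.integrableOn_compact isCompact_Icc).mono_set Set.Ioc_subset_Icc_self
  have hIoc : (gammaMeasure s r) (Ioc u v) = ENNReal.ofReal (∫ t in Ioc u v, gammaPDFReal s r t) := by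
    rw [gammaMeasure, withDensity_apply _ measurableSet_Ioc,
      MeasureTheory.ofReal_integral_eq_lintegral_ofReal hInt
        (ae_of_all _ fun t => gammaPDFReal_nonneg hs hr t)]
    rfl
  rw [hmeas, ENNReal.toReal_add (measure_ne_top _ _) (measure_ne_top _ _), hIoc,
    ENNReal.toReal_ofReal (setIntegral_nonneg measurableSet_Ioc
      fun t _ => gammaPDFReal_nonneg hs hr t), intervalIntegral.integral_of_le huv]

lemma chisqCDF_hasDerivAt {k : ℕ} (hk : 1 ≤ k) {x : ℝ} (hx : 0 < x) :
    HasDerivAt (chisqCDF k) (gammaPDFReal ((k:ℝ)/2) (1/2) x) x := by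
  have hs : 0 < (k:ℝ)/2 := by positivity
  have hr : 0 < (1/2 : ℝ) := by norm_num
  set f := gammaPDFReal ((k:ℝ)/2) (1/2)
  have hc : 0 < x/2 := by positivity
  have hH : HasDerivAt (fun y => chisqCDF k (x/2) + ∫ t in (x/2)..y, f t) (f x) x := by
    refine (hasDerivAt_const _ _).add ?_ |>.congr_deriv (zero_add _)
    refine intervalIntegral.integral_hasDerivAt_right ?_ ?_ (gammaPDFReal_continuousAt hx)
    · refine (ContinuousOn.intervalIntegrable ?_)
      intro t ht
      exact (gammaPDFReal_continuousAt (lt_of_lt_of_le (lt_min hc hx) ht.1)).continuousWithinAt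
    · exact (stronglyMeasurable_gammaPDFReal _ _).stronglyMeasurableAtFilter
  refine hH.congr_of_eventuallyEq ?_
  filter_upwards [isOpen_Ioi.eventually_mem hx] with y (hy : 0 < y)
  rcases le_total (x/2) y with h | h
  · rw [chisqCDF, chisqCDF, gammaCDF_add_integral hs hr hc h]
  · rw [chisqCDF, chisqCDF, gammaCDF_add_integral hs hr hy h,
      intervalIntegral.integral_symm]
    ring

-- pdf * c in exponential form
lemma pdf_mul_form {s c ρ : ℝ} (hc : 0 < c) (hρ : 0 < ρ) :
    gammaPDFReal s (1/2) (c/ρ) * c =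
      ((1/2:ℝ) ^ s / Real.Gamma s) * ρ ^ (1-s) * (c ^ s * Real.exp (-(c/(2*ρ)))) := by
  have hcρ : 0 < c/ρ := div_pos hc hρ
  rw [gammaPDFReal, if_pos hcρ.le, Real.div_rpow hc.le hρ.le, Real.rpow_sub hc,
    Real.rpow_sub hρ s 1, Real.rpow_sub hρ 1 s]
  simp only [Real.rpow_one]
  have h1 : -(1/2 * (c/ρ)) = -(c/(2*ρ)) := by ring
  rw [h1]
  set E := Real.exp (-(c/(2*ρ))) with hE
  have key : c ^ s / c / (ρ ^ s / ρ) * c = ρ / ρ ^ s * c ^ s := by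
    field_simp [hc.ne', hρ.ne', (Real.rpow_pos_of_pos hρ s).ne']
  linear_combination ((1/2:ℝ)^s / Real.Gamma s * E) * key

lemma exp_cmp_iff {c d ρ : ℝ} (k : ℕ) (hc : 0 < c) (hd : 0 < d) (hρ : 0 < ρ) :
    c ^ ((k:ℝ)/2) * Real.exp (-(c/(2*ρ))) < d ^ ((k:ℝ)/2) * Real.exp (-(d/(2*ρ))) ↔
      ρ * ((k:ℝ) * (Real.log c - Real.log d)) < c - d := by
  rw [Real.rpow_def_of_pos hc, Real.rpow_def_of_pos hd, ← Real.exp_add, ← Real.exp_add,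
    Real.exp_lt_exp]
  rw [div_eq_mul_inv c, div_eq_mul_inv d]
  have h2ρ : (0:ℝ) < 2*ρ := by positivity
  have hw : (2*ρ) * (2*ρ)⁻¹ = 1 := mul_inv_cancel₀ h2ρ.ne'
  constructor
  · intro h
    nlinarith [mul_lt_mul_of_pos_right h h2ρ]
  · intro h
    have hwpos : (0:ℝ) < (2*ρ)⁻¹ := by positivity
    nlinarith [mul_lt_mul_of_pos_right h hwpos]

/-- **Unimodality of the χ² equivalence-test power function.** For `0 < b < a` the function
`P ρ = G_k(a/ρ) − G_k(b/ρ)` is strictly increasing on `(0, ρmax]` and strictly decreasing on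
`[ρmax, ∞)`, where `ρmax = (a − b)/(k log(a/b))`; moreover `P ρ → 0` as `ρ → 0⁺` and as
`ρ → ∞`. -/
theorem chisq_power_unimodal
    (k : ℕ) (hk : 1 ≤ k) (a b : ℝ) (hb : 0 < b) (hba : b < a)
    (P : ℝ → ℝ) (hP : ∀ ρ, P ρ = chisqCDF k (a / ρ) - chisqCDF k (b / ρ))
    (ρmax : ℝ) (hρmax : ρmax = (a - b) / (k * Real.log (a / b))) :
    StrictMonoOn P (Set.Ioc 0 ρmax) ∧
    StrictAntiOn P (Set.Ici ρmax) ∧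
    Filter.Tendsto P (nhdsWithin 0 (Set.Ioi 0)) (nhds 0) ∧
    Filter.Tendsto P Filter.atTop (nhds 0) := by
  have hk0 : (0:ℝ) < k := by exact_mod_cast hk
  have hs : 0 < (k:ℝ)/2 := by positivity
  have ha : 0 < a := hb.trans hba
  set f : ℝ → ℝ := gammaPDFReal ((k:ℝ)/2) (1/2) with hf
  have hlog : 0 < Real.log (a/b) := Real.log_pos ((one_lt_div hb).mpr hba)
  have hD : 0 < (k:ℝ) * Real.log (a/b) := mul_pos hk0 hlog
  have hρm : 0 < ρmax := by rw [hρmax]; exact div_pos (sub_pos.mpr hba) hD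
  have hPfun : P = fun ρ => chisqCDF k (a/ρ) - chisqCDF k (b/ρ) := funext hP
  have hlogab : Real.log (a/b) = Real.log a - Real.log b := Real.log_div ha.ne' hb.ne'
  -- derivative of P at positive points
  have hderiv : ∀ ρ, 0 < ρ → HasDerivAt P ((f (b/ρ) * b - f (a/ρ) * a) * (ρ^2)⁻¹) ρ := by
    intro ρ hρ
    have hinv : ∀ c : ℝ, HasDerivAt (fun y : ℝ => c / y) (c * -(ρ^2)⁻¹) ρ := by
      intro c
      simpa [div_eq_mul_inv] using (hasDerivAt_inv hρ.ne').const_mul c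
    have hGa : HasDerivAt (fun y => chisqCDF k (a/y)) (f (a/ρ) * (a * -(ρ^2)⁻¹)) ρ :=
      HasDerivAt.comp ρ (chisqCDF_hasDerivAt hk (div_pos ha hρ)) (hinv a)
    have hGb : HasDerivAt (fun y => chisqCDF k (b/y)) (f (b/ρ) * (b * -(ρ^2)⁻¹)) ρ :=
      HasDerivAt.comp ρ (chisqCDF_hasDerivAt hk (div_pos hb hρ)) (hinv b)
    rw [hPfun]
    exact (hGa.sub hGb).congr_deriv (by ring)
  have hC : 0 < (1/2:ℝ) ^ ((k:ℝ)/2) / Real.Gamma ((k:ℝ)/2) :=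
    div_pos (Real.rpow_pos_of_pos one_half_pos _) (Real.Gamma_pos_of_pos hs)
  -- sign of the derivative
  have hsign_pos : ∀ ρ, 0 < ρ → ρ < ρmax → 0 < f (b/ρ) * b - f (a/ρ) * a := by
    intro ρ hρ hlt
    rw [hf, pdf_mul_form hb hρ, pdf_mul_form ha hρ]
    have hcmp : a ^ ((k:ℝ)/2) * Real.exp (-(a/(2*ρ))) <
        b ^ ((k:ℝ)/2) * Real.exp (-(b/(2*ρ))) := by
      rw [exp_cmp_iff k ha hb hρ, ← hlogab]
      rw [hρmax] at hlt
      exact (lt_div_iff₀ hD).mp hlt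
    nlinarith [mul_pos hC (Real.rpow_pos_of_pos hρ (1-(k:ℝ)/2)), hcmp]
  have hsign_neg : ∀ ρ, 0 < ρ → ρmax < ρ → f (b/ρ) * b - f (a/ρ) * a < 0 := by
    intro ρ hρ hlt
    rw [hf, pdf_mul_form hb hρ, pdf_mul_form ha hρ]
    have hcmp : b ^ ((k:ℝ)/2) * Real.exp (-(b/(2*ρ))) <
        a ^ ((k:ℝ)/2) * Real.exp (-(a/(2*ρ))) := by
      rw [exp_cmp_iff k hb ha hρ]
      have : a - b < ρ * ((k:ℝ) * Real.log (a/b)) := by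
        rw [hρmax] at hlt
        exact (div_lt_iff₀ hD).mp hlt
      nlinarith [hlogab]
    nlinarith [mul_pos hC (Real.rpow_pos_of_pos hρ (1-(k:ℝ)/2)), hcmp]
  have hprob : IsProbabilityMeasure (gammaMeasure ((k:ℝ)/2) (1/2)) :=
    isProbabilityMeasure_gammaMeasure hs (by norm_num)
  have hcdf : ∀ x, chisqCDF k x = cdf (gammaMeasure ((k:ℝ)/2) (1/2)) x := fun x =>
    (cdf_eq_real _ x).symm
  refine ⟨?_, ?_, ?_, ?_⟩
  · refine strictMonoOn_of_deriv_pos (convex_Ioc 0 ρmax) ?_ ?_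
    · intro ρ hρ
      exact (hderiv ρ hρ.1).continuousAt.continuousWithinAt
    · intro ρ hρ
      rw [interior_Ioc] at hρ
      rw [(hderiv ρ hρ.1).deriv]
      exact mul_pos (hsign_pos ρ hρ.1 hρ.2) (inv_pos.mpr (pow_pos hρ.1 2))
  · refine strictAntiOn_of_deriv_neg (convex_Ici ρmax) ?_ ?_
    · intro ρ hρ
      exact (hderiv ρ (hρm.trans_le hρ)).continuousAt.continuousWithinAt
    · intro ρ hρ
      rw [interior_Ici] at hρ
      rw [(hderiv ρ (hρm.trans hρ)).deriv]
      exact mul_neg_of_neg_of_pos (hsign_neg ρ (hρm.trans hρ) hρ)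
        (inv_pos.mpr (pow_pos (hρm.trans hρ) 2))
  · -- limit at 0⁺
    have hta : ∀ c : ℝ, 0 < c → Filter.Tendsto (fun ρ => c/ρ) (nhdsWithin 0 (Set.Ioi 0))
        Filter.atTop := by
      intro c hc
      simpa [div_eq_mul_inv] using tendsto_inv_nhdsGT_zero.const_mul_atTop hc
    have h1 : ∀ c : ℝ, 0 < c → Filter.Tendsto (fun ρ => chisqCDF k (c/ρ))
        (nhdsWithin 0 (Set.Ioi 0)) (nhds 1) := by
      intro c hc
      have := (tendsto_cdf_atTop (gammaMeasure ((k:ℝ)/2) (1/2))).comp (hta c hc)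
      refine this.congr fun ρ => ?_
      simp [Function.comp, hcdf]
    have := (h1 a ha).sub (h1 b hb)
    rw [sub_self] at this
    exact this.congr fun ρ => (hP ρ).symm
  · -- limit at ∞
    have hcdf0 : cdf (gammaMeasure ((k:ℝ)/2) (1/2)) 0 = 0 := by
      rw [cdf_eq_real, measureReal_def]
      have h0 : (gammaMeasure ((k:ℝ)/2) (1/2)) (Set.Iic 0) = 0 := by
        rw [gammaMeasure, withDensity_apply _ measurableSet_Iic,
          ← setLIntegral_congr (Iio_ae_eq_Iic (a := (0:ℝ))),
          lintegral_gammaPDF_of_nonpos le_rfl]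
      norm_num [h0]
    have hta : ∀ c : ℝ, 0 < c → Filter.Tendsto (fun ρ => c/ρ) Filter.atTop
        (nhdsWithin 0 (Set.Ici 0)) := by
      intro c hc
      refine tendsto_nhdsWithin_of_tendsto_nhds_of_eventually_within _ ?_ ?_
      · simpa [div_eq_mul_inv] using tendsto_inv_atTop_zero.const_mul c
      · filter_upwards [Filter.eventually_gt_atTop (0:ℝ)] with ρ hρ
        exact (div_pos hc hρ).le
    have h1 : ∀ c : ℝ, 0 < c → Filter.Tendsto (fun ρ => chisqCDF k (c/ρ))
        Filter.atTop (nhds 0) := by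
      intro c hc
      have hrc : ContinuousWithinAt (cdf (gammaMeasure ((k:ℝ)/2) (1/2))) (Set.Ici 0) 0 :=
        (cdf (gammaMeasure ((k:ℝ)/2) (1/2))).right_continuous 0
      have h2 : Filter.Tendsto (cdf (gammaMeasure ((k:ℝ)/2) (1/2)))
          (nhdsWithin 0 (Set.Ici 0)) (nhds (cdf (gammaMeasure ((k:ℝ)/2) (1/2)) 0)) := hrc
      rw [hcdf0] at h2
      have := h2.comp (hta c hc)
      refine this.congr fun ρ => ?_
      simp [Function.comp, hcdf]
    have := (h1 a ha).sub (h1 b hb)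
    rw [sub_self] at this
    exact this.congr fun ρ => (hP ρ).symm
end

section
/- Let k ≥ 1 be an integer, n > 0 a real, α ∈ (0,1), and 0 < τ⁻ < τ⁺ reals. Then there exist reals 0 < c⁻ < c⁺ satisfying simultaneously G_k(n c⁺/τ⁺) − G_k(n c⁻/τ⁺) = α and G_k(n c⁺/τ⁻) − G_k(n c⁻/τ⁻) = α. -/
open MeasureTheory ProbabilityTheory

section Aux

open Set Filter Topology

variable {k : ℕ}

lemma chisq_shape_pos (hk : 1 ≤ k) : 0 < (k : ℝ) / 2 := by
  have : (1 : ℝ) ≤ k := by exact_mod_cast hk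
  linarith

lemma chisq_isProb (hk : 1 ≤ k) :
    IsProbabilityMeasure (gammaMeasure ((k : ℝ) / 2) (1 / 2)) :=
  isProbabilityMeasure_gammaMeasure (chisq_shape_pos hk) (by norm_num)

lemma chisqCDF_eq_cdf (hk : 1 ≤ k) (x : ℝ) :
    chisqCDF k x = cdf (gammaMeasure ((k : ℝ) / 2) (1 / 2)) x := by
  haveI := chisq_isProb hk
  rw [chisqCDF, cdf_eq_real, measureReal_def]

lemma chisqCDF_nonneg (k : ℕ) (x : ℝ) : 0 ≤ chisqCDF k x := ENNReal.toReal_nonneg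

lemma chisqCDF_le_one (hk : 1 ≤ k) (x : ℝ) : chisqCDF k x ≤ 1 := by
  rw [chisqCDF_eq_cdf hk]
  exact cdf_le_one _ x

lemma chisqCDF_mono (hk : 1 ≤ k) : Monotone (chisqCDF k) := by
  have h : Monotone (cdf (gammaMeasure ((k : ℝ) / 2) (1 / 2))) := monotone_cdf _
  intro x y hxy
  rw [chisqCDF_eq_cdf hk, chisqCDF_eq_cdf hk]
  exact h hxy

lemma chisqCDF_tendsto (hk : 1 ≤ k) : Tendsto (chisqCDF k) atTop (𝓝 1) := by
  refine (tendsto_cdf_atTop (gammaMeasure ((k : ℝ) / 2) (1 / 2))).congr fun x => ?_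
  rw [chisqCDF_eq_cdf hk]

lemma chisq_integrable (hk : 1 ≤ k) :
    Integrable (gammaPDFReal ((k : ℝ) / 2) (1 / 2)) := by
  have ha := chisq_shape_pos hk
  constructor
  · exact (measurable_gammaPDFReal _ _).aestronglyMeasurable
  · rw [hasFiniteIntegral_iff_norm]
    have h : ∀ x, ENNReal.ofReal ‖gammaPDFReal ((k : ℝ) / 2) (1 / 2) x‖ =
        gammaPDF ((k : ℝ) / 2) (1 / 2) x := by
      intro x
      rw [Real.norm_of_nonneg (gammaPDFReal_nonneg ha (by norm_num) x)]
      rfl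
    simp only [h, lintegral_gammaPDF_eq_one ha (by norm_num : (0:ℝ) < 1/2)]
    exact ENNReal.one_lt_top

lemma chisqCDF_eq_integral (hk : 1 ≤ k) (x : ℝ) :
    chisqCDF k x = ∫ t in Iic x, gammaPDFReal ((k : ℝ) / 2) (1 / 2) t := by
  rw [chisqCDF_eq_cdf hk]
  exact
    cdf_gammaMeasure_eq_integral (chisq_shape_pos hk) (by norm_num : (0:ℝ) < 1/2) x

lemma chisqCDF_eq_primitive (hk : 1 ≤ k) (x : ℝ) :
    chisqCDF k x = ∫ t in (0:ℝ)..x, gammaPDFReal ((k : ℝ) / 2) (1 / 2) t := by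
  set f := gammaPDFReal ((k : ℝ) / 2) (1 / 2) with hf
  have hint := chisq_integrable hk
  have hneg : ∀ t : ℝ, t < 0 → f t = 0 := by
    intro t ht
    simp [hf, gammaPDFReal, not_le.mpr ht]
  rcases le_or_gt 0 x with hx | hx
  · have hdisj : Disjoint (Iic (0:ℝ)) (Ioc 0 x) := by
      rw [Set.disjoint_left]
      rintro t (ht : t ≤ 0) ⟨ht', _⟩
      exact absurd ht (not_le.mpr ht')
    rw [chisqCDF_eq_integral hk, ← Iic_union_Ioc_eq_Iic hx,
      setIntegral_union hdisj measurableSet_Ioc hint.integrableOn hint.integrableOn,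
      intervalIntegral.integral_of_le hx]
    have h0 : ∫ t in Iic (0:ℝ), f t = 0 := by
      rw [integral_Iic_eq_integral_Iio]
      exact setIntegral_eq_zero_of_forall_eq_zero fun t ht => hneg t ht
    rw [h0, zero_add]
  · rw [chisqCDF_eq_integral hk, intervalIntegral.integral_of_ge hx.le]
    have h1 : ∫ t in Iic x, f t = 0 :=
      setIntegral_eq_zero_of_forall_eq_zero fun t ht => hneg t (lt_of_le_of_lt ht hx)
    have h2 : ∫ t in Ioc x 0, f t = 0 := by
      rw [integral_Ioc_eq_integral_Ioo]
      exact setIntegral_eq_zero_of_forall_eq_zero fun t ht => hneg t ht.2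
    rw [h1, h2, neg_zero]

lemma chisqCDF_zero (hk : 1 ≤ k) : chisqCDF k 0 = 0 := by
  rw [chisqCDF_eq_primitive hk]
  simp

lemma chisqCDF_continuous (hk : 1 ≤ k) : Continuous (chisqCDF k) := by
  have h : Continuous fun x => ∫ t in (0:ℝ)..x, gammaPDFReal ((k : ℝ) / 2) (1 / 2) t :=
    intervalIntegral.continuous_primitive
      (fun a b => (chisq_integrable hk).intervalIntegrable) 0
  exact h.congr fun x => (chisqCDF_eq_primitive hk x).symm

lemma chisqCDF_strict (hk : 1 ≤ k) {x y : ℝ} (hx : 0 ≤ x) (hxy : x < y) :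
    chisqCDF k x < chisqCDF k y := by
  have hint := chisq_integrable hk
  have h1 : chisqCDF k y - chisqCDF k x
      = ∫ t in x..y, gammaPDFReal ((k : ℝ) / 2) (1 / 2) t := by
    rw [chisqCDF_eq_primitive hk, chisqCDF_eq_primitive hk,
      ← intervalIntegral.integral_add_adjacent_intervals (a := (0:ℝ)) (b := x) (c := y)
        hint.intervalIntegrable hint.intervalIntegrable]
    ring
  have h2 : 0 < ∫ t in x..y, gammaPDFReal ((k : ℝ) / 2) (1 / 2) t := by
    refine intervalIntegral.intervalIntegral_pos_of_pos_on hint.intervalIntegrable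
      (fun t ht => ?_) hxy
    exact gammaPDFReal_pos (chisq_shape_pos hk) (by norm_num) (lt_of_le_of_lt hx ht.1)
  linarith

lemma exists_chisqCDF_eq (hk : 1 ≤ k) {u : ℝ} (h0 : 0 ≤ u) (h1 : u < 1) :
    ∃ x, 0 ≤ x ∧ chisqCDF k x = u := by
  obtain ⟨b, hb0, hbu⟩ : ∃ b, 0 ≤ b ∧ u < chisqCDF k b := by
    have h := ((chisqCDF_tendsto hk).eventually_const_lt h1).and (eventually_ge_atTop (0:ℝ))
    obtain ⟨b, hb1, hb2⟩ := h.exists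
    exact ⟨b, hb2, hb1⟩
  have hIVT := intermediate_value_Icc hb0 (chisqCDF_continuous hk).continuousOn
  have hu : u ∈ Icc (chisqCDF k 0) (chisqCDF k b) := by
    constructor
    · rw [chisqCDF_zero hk]; exact h0
    · exact hbu.le
  obtain ⟨x, hx, hFx⟩ := hIVT hu
  exact ⟨x, hx.1, hFx⟩

lemma chisqInv_ex (k : ℕ) (u : ℝ) :
    ∃ x : ℝ, (0 ≤ x ∧ chisqCDF k x = u) ∨ ¬ ∃ y, 0 ≤ y ∧ chisqCDF k y = u := by
  by_cases h : ∃ y, 0 ≤ y ∧ chisqCDF k y = u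
  · obtain ⟨y, hy⟩ := h
    exact ⟨y, Or.inl hy⟩
  · exact ⟨0, Or.inr h⟩

/-- A right inverse of the chi-squared CDF on `[0,1)`. -/
noncomputable def chisqInv (k : ℕ) (u : ℝ) : ℝ :=
  (chisqInv_ex k u).choose

lemma chisqInv_spec (hk : 1 ≤ k) {u : ℝ} (h0 : 0 ≤ u) (h1 : u < 1) :
    0 ≤ chisqInv k u ∧ chisqCDF k (chisqInv k u) = u := by
  rcases (chisqInv_ex k u).choose_spec with h | h
  · exact h
  · exact absurd (exists_chisqCDF_eq hk h0 h1) h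

lemma chisqInv_unique (hk : 1 ≤ k) {x u : ℝ} (h1 : u < 1) (hx : 0 ≤ x)
    (hFx : chisqCDF k x = u) : chisqInv k u = x := by
  have h0 : 0 ≤ u := hFx ▸ chisqCDF_nonneg k x
  obtain ⟨hi0, hiF⟩ := chisqInv_spec hk h0 h1
  rcases lt_trichotomy (chisqInv k u) x with h | h | h
  · exact absurd (hiF.trans hFx.symm) (ne_of_lt (chisqCDF_strict hk hi0 h))
  · exact h
  · exact absurd (hFx.trans hiF.symm) (ne_of_lt (chisqCDF_strict hk hx h))

lemma chisqInv_lt (hk : 1 ≤ k) {u v : ℝ} (h0 : 0 ≤ u) (huv : u < v) (h1 : v < 1) :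
    chisqInv k u < chisqInv k v := by
  obtain ⟨hu0, huF⟩ := chisqInv_spec hk h0 (huv.trans h1)
  obtain ⟨hv0, hvF⟩ := chisqInv_spec hk (h0.trans huv.le) h1
  by_contra h
  push_neg at h
  have := chisqCDF_mono hk h
  rw [huF, hvF] at this
  exact absurd this (not_le.mpr huv)

lemma chisqInv_pos (hk : 1 ≤ k) {u : ℝ} (h0 : 0 < u) (h1 : u < 1) :
    0 < chisqInv k u := by
  obtain ⟨hi0, hiF⟩ := chisqInv_spec hk h0.le h1
  rcases hi0.lt_or_eq with h | h
  · exact h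
  · exfalso
    rw [← h, chisqCDF_zero hk] at hiF
    exact absurd hiF.symm (ne_of_gt h0)

lemma chisqInv_continuousAt (hk : 1 ≤ k) {u : ℝ} (h0 : 0 < u) (h1 : u < 1) :
    ContinuousAt (chisqInv k) u := by
  set u' := (u + 1) / 2 with hu'
  have huu' : u < u' := by rw [hu']; linarith
  have hu'1 : u' < 1 := by rw [hu']; linarith
  have hmono : StrictMonoOn (chisqInv k) (Ico 0 1) :=
    fun a ha b hb hab => chisqInv_lt hk ha.1 hab hb.2
  refine hmono.continuousAt_of_image_mem_nhds (Ico_mem_nhds h0 h1) ?_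
  have hsub : Icc 0 (chisqInv k u') ⊆ chisqInv k '' Ico 0 1 := by
    intro x hx
    have hFx1 : chisqCDF k x ≤ u' := by
      have := chisqCDF_mono hk hx.2
      rwa [(chisqInv_spec hk (h0.le.trans huu'.le) hu'1).2] at this
    refine ⟨chisqCDF k x, ⟨chisqCDF_nonneg k x, lt_of_le_of_lt hFx1 hu'1⟩, ?_⟩
    exact chisqInv_unique hk (lt_of_le_of_lt hFx1 hu'1) hx.1 rfl
  exact mem_of_superset
    (Icc_mem_nhds (chisqInv_pos hk h0 h1) (chisqInv_lt hk h0.le huu' hu'1)) hsub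

end Aux

open Set Filter Topology

/-- **Solvability of the ABC⋆ calibration equations for the scaled χ² equivalence test.**
For every `k ≥ 1`, `n > 0`, `α ∈ (0,1)` and tolerances `0 < τ⁻ < τ⁺` there exist
`0 < c⁻ < c⁺` such that the power at both tolerance boundaries equals `α`:
`G_k(n c⁺/τ⁺) − G_k(n c⁻/τ⁺) = α` and `G_k(n c⁺/τ⁻) − G_k(n c⁻/τ⁻) = α`. -/
theorem chisq_calibration_solvable
    (k : ℕ) (hk : 1 ≤ k) (n : ℝ) (hn : 0 < n)
    (α : ℝ) (hα : α ∈ Set.Ioo (0 : ℝ) 1)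
    (τm τp : ℝ) (hτm : 0 < τm) (hττ : τm < τp) :
    ∃ cm cp : ℝ, 0 < cm ∧ cm < cp ∧
      chisqCDF k (n * cp / τp) - chisqCDF k (n * cm / τp) = α ∧
      chisqCDF k (n * cp / τm) - chisqCDF k (n * cm / τm) = α := by
  obtain ⟨hα0, hα1⟩ := hα
  set F := chisqCDF k with hF
  set r := τp / τm with hrdef
  have hτp : 0 < τp := hτm.trans hττ
  have hr1 : 1 < r := (one_lt_div hτm).mpr hττ
  have hr0 : 0 < r := lt_trans one_pos hr1
  -- key points
  set xs := chisqInv k (1 - α) with hxs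
  have hxs_spec := chisqInv_spec hk (by linarith) (by linarith) (k := k) (u := 1 - α)
  have hxs_pos : 0 < xs := chisqInv_pos hk (by linarith) (by linarith)
  set y₀ := chisqInv k α with hy₀
  have hy₀_spec := chisqInv_spec hk hα0.le hα1 (k := k) (u := α)
  have hy₀_pos : 0 < y₀ := chisqInv_pos hk hα0 hα1
  set δ := F (r * y₀) - α with hδ
  have hδ_pos : 0 < δ := by
    have h := chisqCDF_strict hk hy₀_pos.le ((lt_mul_iff_one_lt_left hy₀_pos).mpr hr1)
    rw [hy₀_spec.2] at h
    simpa [hδ] using h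
  -- the point x₂
  set x₂ := (xs / r + xs) / 2 with hx₂
  have hxsr : xs / r < xs := div_lt_self hxs_pos hr1
  have hx₂a : xs / r < x₂ := by rw [hx₂]; linarith
  have hx₂b : x₂ < xs := by rw [hx₂]; linarith
  have hx₂_pos : 0 < x₂ := lt_trans (div_pos hxs_pos hr0) hx₂a
  set u₂ := F x₂ with hu₂
  have hu₂_pos : 0 < u₂ := by
    have := chisqCDF_strict hk le_rfl hx₂_pos
    rwa [chisqCDF_zero hk] at this
  have hu₂_lt : u₂ < 1 - α := by
    have := chisqCDF_strict hk hx₂_pos.le hx₂b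
    rwa [hxs_spec.2] at this
  -- the point x₁
  obtain ⟨x₁, hx₁_pos, hx₁_lt, hx₁_small⟩ :
      ∃ x₁, 0 < x₁ ∧ x₁ < x₂ ∧ F (r * x₁) < δ := by
    have hc : ContinuousAt (fun t : ℝ => F (r * t)) 0 :=
      (chisqCDF_continuous hk).continuousAt.comp (continuousAt_const.mul continuousAt_id)
    have h0 : F 0 = 0 := chisqCDF_zero hk
    have htend : Tendsto (fun t : ℝ => F (r * t)) (𝓝 0) (𝓝 0) := by
      have hc' := hc
      rw [ContinuousAt] at hc'
      simpa only [mul_zero, h0] using hc'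
    have h1 : ∀ᶠ t in 𝓝 (0:ℝ), F (r * t) < δ := htend.eventually_lt_const hδ_pos
    have h2 : ∀ᶠ t in 𝓝 (0:ℝ), t < x₂ :=
      (tendsto_id : Tendsto id (𝓝 (0:ℝ)) (𝓝 0)).eventually_lt_const hx₂_pos
    have h3 : ∀ᶠ t in 𝓝[>] (0:ℝ), F (r * t) < δ ∧ t < x₂ :=
      eventually_nhdsWithin_of_eventually_nhds (h1.and h2)
    obtain ⟨t, ht, ht'⟩ := (h3.and self_mem_nhdsWithin).exists
    exact ⟨t, ht', ht.2, ht.1⟩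
  set u₁ := F x₁ with hu₁
  have hu₁_pos : 0 < u₁ := by
    have := chisqCDF_strict hk le_rfl hx₁_pos
    rwa [chisqCDF_zero hk] at this
  have hu₁₂ : u₁ < u₂ := chisqCDF_strict hk hx₁_pos.le hx₁_lt
  -- the function φ
  set φ : ℝ → ℝ := fun u => F (r * chisqInv k (u + α)) - F (r * chisqInv k u) with hφ
  have hmem : ∀ u ∈ Icc u₁ u₂, (0 < u ∧ u < 1) ∧ (0 < u + α ∧ u + α < 1) := by
    intro u hu
    have h1 : 0 < u := lt_of_lt_of_le hu₁_pos hu.1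
    have h2 : u ≤ u₂ := hu.2
    exact ⟨⟨h1, by linarith⟩, by linarith, by linarith⟩
  have hcont : ContinuousOn φ (Icc u₁ u₂) := by
    intro u hu
    obtain ⟨⟨h01, h02⟩, h03, h04⟩ := hmem u hu
    have hc1 : ContinuousAt (fun u : ℝ => F (r * chisqInv k u)) u :=
      (chisqCDF_continuous hk).continuousAt.comp
        (continuousAt_const.mul (chisqInv_continuousAt hk h01 h02))
    have hc2 : ContinuousAt (fun u : ℝ => F (r * chisqInv k (u + α))) u := by
      have hadd : ContinuousAt (fun v : ℝ => v + α) u := continuousAt_id.add continuousAt_const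
      have hinner : ContinuousAt (fun u : ℝ => chisqInv k (u + α)) u :=
        ContinuousAt.comp (g := chisqInv k) (f := fun v : ℝ => v + α) (x := u)
          (chisqInv_continuousAt hk h03 h04) hadd
      exact (chisqCDF_continuous hk).continuousAt.comp (continuousAt_const.mul hinner)
    exact (hc2.sub hc1).continuousWithinAt
  -- φ u₁ > α
  have hφu₁ : α < φ u₁ := by
    have hXeq : chisqInv k u₁ = x₁ :=
      chisqInv_unique hk (by linarith) hx₁_pos.le rfl
    have hY_spec := chisqInv_spec hk (by positivity) (by linarith) (k := k) (u := u₁ + α)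
    have hY_gt : y₀ < chisqInv k (u₁ + α) := by
      by_contra h
      push_neg at h
      have := chisqCDF_mono hk h
      rw [hY_spec.2, hy₀_spec.2] at this
      linarith
    have hmul : r * y₀ ≤ r * chisqInv k (u₁ + α) :=
      mul_le_mul_of_nonneg_left hY_gt.le hr0.le
    have h5 : F (r * y₀) ≤ F (r * chisqInv k (u₁ + α)) := chisqCDF_mono hk hmul
    have h6 : F (r * x₁) < δ := hx₁_small
    simp only [hφ, hXeq]
    have : F (r * y₀) = α + δ := by rw [hδ]; ring
    linarith
  -- φ u₂ < α
  have hφu₂ : φ u₂ < α := by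
    have hXeq : chisqInv k u₂ = x₂ :=
      chisqInv_unique hk (by linarith) hx₂_pos.le rfl
    have h7 : xs < r * x₂ := by
      rw [← div_lt_iff₀' hr0]
      exact hx₂a
    have h8 : 1 - α < F (r * x₂) := by
      have := chisqCDF_strict hk hxs_pos.le h7
      rwa [hxs_spec.2] at this
    have h9 : F (r * chisqInv k (u₂ + α)) ≤ 1 := chisqCDF_le_one hk _
    simp only [hφ, hXeq]
    linarith
  -- IVT
  have hIVT := intermediate_value_Icc' hu₁₂.le hcont
  obtain ⟨u, hu_mem, hu_eq⟩ := hIVT ⟨hφu₂.le, hφu₁.le⟩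
  obtain ⟨⟨hu0, hu1⟩, huα0, huα1⟩ := hmem u hu_mem
  set x := chisqInv k u with hx
  set y := chisqInv k (u + α) with hy
  have hx_spec := chisqInv_spec hk hu0.le hu1 (k := k) (u := u)
  have hy_spec := chisqInv_spec hk huα0.le huα1 (k := k) (u := u + α)
  have hx_pos : 0 < x := chisqInv_pos hk hu0 hu1
  have hxy : x < y := by
    by_contra h
    push_neg at h
    have := chisqCDF_mono hk h
    rw [hx_spec.2, hy_spec.2] at this
    linarith
  refine ⟨τp * x / n, τp * y / n, by positivity, ?_, ?_, ?_⟩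
  · have h : τp * x < τp * y := by nlinarith
    exact div_lt_div_of_pos_right h hn
  · have e1 : n * (τp * y / n) / τp = y := by field_simp
    have e2 : n * (τp * x / n) / τp = x := by field_simp
    rw [e1, e2]
    show chisqCDF k (chisqInv k (u + α)) - chisqCDF k (chisqInv k u) = α
    rw [hy_spec.2, hx_spec.2]
    ring
  · have e1 : n * (τp * y / n) / τm = r * y := by
      rw [hrdef]; field_simp
    have e2 : n * (τp * x / n) / τm = r * x := by
      rw [hrdef]; field_simp
    rw [e1, e2]
    exact hu_eq
end
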